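/- Every finite connected graph with Euler characteristic -1 and no vertices of degree 1 is a figure-eight graph, a barbell graph, or a theta graph. -/

import Mathlib

/-- A multigraph: vertices, edges, and tail/head maps (loops and parallel
edges allowed). -/
structure MGraph where
  V : Type
  E : Type
  tail : E → V
  head : E → V

namespace MGraph

variable (G : MGraph)

/-- Directed edges: an edge together with an orientation. -/
abbrev Dir := G.E × Bool

/-- The tail of a directed edge. -/
def dtail : G.Dir → G.V := fun d => if d.2 then G.tail d.1 else G.head d.1

/-- The head of a directed edge. -/
def dhead : G.Dir → G.V := fun d => if d.2 then G.head d.1 else G.tail d.1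

/-- The inverse (reversal) of a directed edge. -/
def dinv : G.Dir → G.Dir := fun d => (d.1, !d.2)

/-- A walk is a list of directed edges in which the head of each directed edge
is the tail of the next one. -/
def IsWalk (w : List G.Dir) : Prop :=
  w.Chain' (fun a b => G.dhead a = G.dtail b)

/-- A walk is non-backtracking if no directed edge is immediately followed by
its inverse. -/
def NonBack (w : List G.Dir) : Prop :=
  w.Chain' (fun a b => b ≠ G.dinv a)

/-- The starting vertex of a (nonempty) walk. -/
def wstart (w : List G.Dir) : Option G.V := w.head?.map G.dtail

/-- The terminating vertex of a (nonempty) walk. -/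
def wend (w : List G.Dir) : Option G.V := w.getLast?.map G.dhead

/-- A walk is closed if it is nontrivial and its endpoints coincide. -/
def Closed (w : List G.Dir) : Prop := w ≠ [] ∧ G.wstart w = G.wend w

/-- The number of times the directed edge `d` is traversed by the walk `w`. -/
noncomputable def cnt (w : List G.Dir) (d : G.Dir) : ℕ :=
  letI := Classical.decEq G.Dir
  w.count d

/-- A walk is edge neutral if it traverses each edge the same number of times
in each direction. -/
def EdgeNeutral (w : List G.Dir) : Prop :=
  ∀ e : G.E, G.cnt w (e, true) = G.cnt w (e, false)

/-- The girth: the minimal length of a nontrivial closed non-backtracking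
walk (`⊤` if none exists). -/
noncomputable def girth : ℕ∞ :=
  sInf {n : ℕ∞ | ∃ w : List G.Dir,
    G.IsWalk w ∧ G.NonBack w ∧ G.Closed w ∧ n = w.length}

/-- The abelian girth: the minimal length of a nontrivial closed
non-backtracking edge-neutral walk (`⊤` if none exists). -/
noncomputable def ablGirth : ℕ∞ :=
  sInf {n : ℕ∞ | ∃ w : List G.Dir,
    G.IsWalk w ∧ G.NonBack w ∧ G.Closed w ∧ G.EdgeNeutral w ∧ n = w.length}

/-- The degree of a vertex: the number of directed edges with tail `v`
(so a loop contributes 2). -/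
noncomputable def deg (v : G.V) : ℕ := Nat.card {d : G.Dir // G.dtail d = v}

/-- Adjacency via a directed edge. -/
def adj (u v : G.V) : Prop := ∃ d : G.Dir, G.dtail d = u ∧ G.dhead d = v

/-- A graph is connected if it is nonempty and any two vertices are joined by
a walk. -/
def Connected : Prop :=
  Nonempty G.V ∧ ∀ u v : G.V, Relation.ReflTransGen G.adj u v

/-- The Euler characteristic `|V| - |E|`. -/
noncomputable def eulerChar : ℤ := (Nat.card G.V : ℤ) - (Nat.card G.E : ℤ)

/-- A walk traverses each edge at most once (in either direction). -/
def EdgesDistinct (w : List G.Dir) : Prop :=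
  ∀ e : G.E, G.cnt w (e, true) + G.cnt w (e, false) ≤ 1

/-- The edge `e` occurs in the walk `w` (in some direction). -/
def edgeIn (w : List G.Dir) (e : G.E) : Prop := (e, true) ∈ w ∨ (e, false) ∈ w

/-- The vertex `x` is visited by the walk `w`. -/
def vtxIn (w : List G.Dir) (x : G.V) : Prop :=
  (∃ d ∈ w, G.dtail d = x) ∨ (∃ d ∈ w, G.dhead d = x)

/-- A cycle based at `v`: a nontrivial strongly closed non-backtracking walk
from `v` to `v` traversing each edge at most once. -/
def IsCycleAt (v : G.V) (w : List G.Dir) : Prop :=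
  G.IsWalk w ∧ G.NonBack w ∧ G.wstart w = some v ∧ G.wend w = some v ∧
    G.EdgesDistinct w ∧
    (∀ a b : G.Dir, w.head? = some a → w.getLast? = some b → a ≠ G.dinv b)

/-- A path from `u` to `v`: a non-backtracking walk from `u` to `v`
traversing each edge at most once. -/
def IsPathBetween (u v : G.V) (w : List G.Dir) : Prop :=
  G.IsWalk w ∧ G.NonBack w ∧ G.wstart w = some u ∧ G.wend w = some v ∧
    G.EdgesDistinct w

/-- One elementary reduction step on a walk: deleting a reversal, i.e. an
adjacent pair consisting of a directed edge and its inverse. -/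
def RStep (w w' : List G.Dir) : Prop :=
  ∃ (pre suf : List G.Dir) (d : G.Dir),
    w = pre ++ d :: G.dinv d :: suf ∧ w' = pre ++ suf

end MGraph

namespace MGraph

variable (G : MGraph)

/-- `G` is a figure-eight graph: two edge-disjoint cycles sharing exactly one
vertex and covering all edges. -/
def IsFigureEight : Prop :=
  ∃ (v : G.V) (c₁ c₂ : List G.Dir),
    G.IsCycleAt v c₁ ∧ G.IsCycleAt v c₂ ∧
    (∀ e : G.E, ¬(G.edgeIn c₁ e ∧ G.edgeIn c₂ e)) ∧
    (∀ x : G.V, G.vtxIn c₁ x → G.vtxIn c₂ x → x = v) ∧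
    (∀ e : G.E, G.edgeIn c₁ e ∨ G.edgeIn c₂ e)

/-- `G` is a barbell graph: two disjoint cycles joined by a bar of positive
length, all mutually edge-disjoint, covering all edges. -/
def IsBarbell : Prop :=
  ∃ (u v : G.V) (c₁ c₂ p : List G.Dir),
    u ≠ v ∧ G.IsCycleAt u c₁ ∧ G.IsCycleAt v c₂ ∧ G.IsPathBetween u v p ∧
    (∀ e : G.E, ¬(G.edgeIn c₁ e ∧ G.edgeIn c₂ e)) ∧
    (∀ e : G.E, ¬(G.edgeIn c₁ e ∧ G.edgeIn p e)) ∧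
    (∀ e : G.E, ¬(G.edgeIn c₂ e ∧ G.edgeIn p e)) ∧
    (∀ x : G.V, G.vtxIn c₁ x → G.vtxIn c₂ x → False) ∧
    (∀ x : G.V, G.vtxIn p x → G.vtxIn c₁ x → x = u) ∧
    (∀ x : G.V, G.vtxIn p x → G.vtxIn c₂ x → x = v) ∧
    (∀ e : G.E, G.edgeIn c₁ e ∨ G.edgeIn c₂ e ∨ G.edgeIn p e)

/-- `G` is a theta graph: two distinct vertices joined by three pairwise
edge-disjoint, internally disjoint paths covering all edges. -/
def IsTheta : Prop :=
  ∃ (u v : G.V) (p₁ p₂ p₃ : List G.Dir),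
    u ≠ v ∧ G.IsPathBetween u v p₁ ∧ G.IsPathBetween u v p₂ ∧
    G.IsPathBetween u v p₃ ∧
    (∀ e : G.E, ¬(G.edgeIn p₁ e ∧ G.edgeIn p₂ e)) ∧
    (∀ e : G.E, ¬(G.edgeIn p₁ e ∧ G.edgeIn p₃ e)) ∧
    (∀ e : G.E, ¬(G.edgeIn p₂ e ∧ G.edgeIn p₃ e)) ∧
    (∀ x : G.V, G.vtxIn p₁ x → G.vtxIn p₂ x → x = u ∨ x = v) ∧
    (∀ x : G.V, G.vtxIn p₁ x → G.vtxIn p₃ x → x = u ∨ x = v) ∧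
    (∀ x : G.V, G.vtxIn p₂ x → G.vtxIn p₃ x → x = u ∨ x = v) ∧
    (∀ e : G.E, G.edgeIn p₁ e ∨ G.edgeIn p₂ e ∨ G.edgeIn p₃ e)

end MGraph

set_option linter.unusedSectionVars false

namespace MGraph

variable (G : MGraph)

lemma dinv_dinv (d : G.Dir) : G.dinv (G.dinv d) = d := by
  simp [dinv]

lemma dinv_ne (d : G.Dir) : G.dinv d ≠ d := by
  simp [dinv, Prod.ext_iff]

lemma ne_dinv (d : G.Dir) : d ≠ G.dinv d := (G.dinv_ne d).symm

lemma dinv_injective : Function.Injective G.dinv := by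
  intro a b h
  rw [← G.dinv_dinv a, h, G.dinv_dinv]

lemma dtail_dinv (d : G.Dir) : G.dtail (G.dinv d) = G.dhead d := by
  cases d with
  | mk e b => cases b <;> simp [dinv, dtail, dhead]

lemma dhead_dinv (d : G.Dir) : G.dhead (G.dinv d) = G.dtail d := by
  cases d with
  | mk e b => cases b <;> simp [dinv, dtail, dhead]

lemma fst_dinv (d : G.Dir) : (G.dinv d).1 = d.1 := rfl

lemma eq_or_dinv_of_fst_eq {a b : G.Dir} (h : a.1 = b.1) : a = b ∨ a = G.dinv b := by
  cases a with
  | mk e s => cases b with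
    | mk e' s' =>
      simp only at h
      subst h
      cases s <;> cases s' <;> simp [dinv]

variable [Finite G.V] [Finite G.E]

instance : Finite G.Dir := by unfold Dir; infer_instance

/-- At a degree-2 vertex, any two directed edges other than a given one coincide. -/
lemma deg_two_unique {x : G.V} (h2 : G.deg x = 2) {a b c : G.Dir}
    (ha : G.dtail a = x) (hb : G.dtail b = x) (hc : G.dtail c = x)
    (hba : b ≠ a) (hca : c ≠ a) : b = c := by
  rw [deg, Nat.card_eq_two_iff' (⟨a, ha⟩ : {d : G.Dir // G.dtail d = x})] at h2
  obtain ⟨u, -, hu⟩ := h2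
  have h1 := hu ⟨b, hb⟩ (by simpa [Subtype.ext_iff] using hba)
  have h2 := hu ⟨c, hc⟩ (by simpa [Subtype.ext_iff] using hca)
  rw [← h2] at h1
  exact congrArg Subtype.val h1

/-- There exists a continuation at a degree-2 vertex. -/
lemma exists_next {d : G.Dir} (h2 : G.deg (G.dhead d) = 2) :
    ∃ d', G.dtail d' = G.dhead d ∧ d' ≠ G.dinv d := by
  rw [deg, Nat.card_eq_two_iff' (⟨G.dinv d, G.dtail_dinv d⟩ :
    {c : G.Dir // G.dtail c = G.dhead d})] at h2
  obtain ⟨u, hu, -⟩ := h2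
  exact ⟨u.1, u.2, fun h => hu (Subtype.ext h)⟩

/-- The successor of a directed edge (junk value if head is not a degree-2 vertex). -/
noncomputable def nxt (d : G.Dir) : G.Dir :=
  haveI : Nonempty G.Dir := ⟨d⟩
  Classical.epsilon (fun d' => G.dtail d' = G.dhead d ∧ d' ≠ G.dinv d)

lemma nxt_spec {d : G.Dir} (h2 : G.deg (G.dhead d) = 2) :
    G.dtail (G.nxt d) = G.dhead d ∧ G.nxt d ≠ G.dinv d := by
  haveI : Nonempty G.Dir := ⟨d⟩
  exact Classical.epsilon_spec (G.exists_next h2)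

lemma nxt_tail {d : G.Dir} (h2 : G.deg (G.dhead d) = 2) :
    G.dtail (G.nxt d) = G.dhead d := by
  exact (G.nxt_spec h2).1

lemma nxt_ne_dinv {d : G.Dir} (h2 : G.deg (G.dhead d) = 2) :
    G.nxt d ≠ G.dinv d := by
  exact (G.nxt_spec h2).2

lemma nxt_unique {d c : G.Dir} (h2 : G.deg (G.dhead d) = 2)
    (hc : G.dtail c = G.dhead d) (hcd : c ≠ G.dinv d) : c = G.nxt d :=
  G.deg_two_unique h2 (G.dtail_dinv d) hc (G.nxt_tail h2) hcd (G.nxt_ne_dinv h2)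

/-- Reversal of a step. -/
lemma nxt_rev {d : G.Dir} (h2 : G.deg (G.dhead d) = 2) :
    G.nxt (G.dinv (G.nxt d)) = G.dinv d := by
  have hh : G.dhead (G.dinv (G.nxt d)) = G.dhead d := by
    rw [G.dhead_dinv, G.nxt_tail h2]
  refine (G.nxt_unique (by rw [hh]; exact h2) ?_ ?_).symm
  · rw [G.dtail_dinv, hh]
  · rw [G.dinv_dinv]
    exact (G.nxt_ne_dinv h2).symm

lemma nxt_inj {a b : G.Dir} (ha : G.deg (G.dhead a) = 2)
    (hb : G.deg (G.dhead b) = 2) (h : G.nxt a = G.nxt b) : a = b := by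
  have := G.nxt_rev ha
  rw [h, G.nxt_rev hb] at this
  exact (G.dinv_injective this).symm

end MGraph
namespace MGraph

variable (G : MGraph) [Finite G.V] [Finite G.E]

/-- The trail sequence starting from a directed edge. -/
noncomputable def seq (d0 : G.Dir) : ℕ → G.Dir := fun n => G.nxt^[n] d0

lemma seq_zero (d0 : G.Dir) : G.seq d0 0 = d0 := rfl

lemma seq_succ (d0 : G.Dir) (n : ℕ) : G.seq d0 (n + 1) = G.nxt (G.seq d0 n) :=
  Function.iterate_succ_apply' _ _ _

lemma trail_stops {d0 : G.Dir} (hd0 : G.deg (G.dtail d0) ≠ 2) :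
    ∃ n, G.deg (G.dhead (G.seq d0 n)) ≠ 2 := by
  by_contra h
  push_neg at h
  have htail : ∀ n, G.dtail (G.seq d0 (n + 1)) = G.dhead (G.seq d0 n) := by
    intro n
    rw [G.seq_succ]
    exact G.nxt_tail (h n)
  have hzero : ∀ n, G.seq d0 n = d0 → n = 0 := by
    rintro (_ | k) hn
    · rfl
    · exfalso
      apply hd0
      rw [← hn, htail k]
      exact h k
  have hinj : Function.Injective (G.seq d0) := by
    intro m n hmn
    induction m generalizing n with
    | zero => exact (hzero n hmn.symm).symm
    | succ k ih =>
      cases n with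
      | zero => exact absurd (hzero _ hmn) (Nat.succ_ne_zero k)
      | succ l =>
        rw [G.seq_succ, G.seq_succ] at hmn
        exact congrArg Nat.succ (ih (G.nxt_inj (h k) (h l) hmn))
  obtain ⟨m, n, hne, he⟩ := Finite.exists_ne_map_eq_of_infinite (G.seq d0)
  exact hne (hinj he)

open Classical in
/-- The index at which the trail from `d0` first hits a non-degree-2 vertex. -/
noncomputable def stopN (d0 : G.Dir) : ℕ :=
  if h : ∃ n, G.deg (G.dhead (G.seq d0 n)) ≠ 2 then Nat.find h else 0

open Classical in
lemma stopN_spec {d0 : G.Dir} (hd0 : G.deg (G.dtail d0) ≠ 2) :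
    G.deg (G.dhead (G.seq d0 (G.stopN d0))) ≠ 2 := by
  rw [stopN, dif_pos (G.trail_stops hd0)]
  exact Nat.find_spec (G.trail_stops hd0)

open Classical in
lemma stopN_min {d0 : G.Dir} (hd0 : G.deg (G.dtail d0) ≠ 2) {j : ℕ}
    (hj : j < G.stopN d0) : G.deg (G.dhead (G.seq d0 j)) = 2 := by
  rw [stopN, dif_pos (G.trail_stops hd0)] at hj
  have := Nat.find_min (G.trail_stops hd0) hj
  tauto

end MGraph
namespace MGraph

variable (G : MGraph) [Finite G.V] [Finite G.E]

section Trail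

variable {d0 : G.Dir} (hd0 : G.deg (G.dtail d0) ≠ 2)

include hd0

lemma seq_walk {j : ℕ} (hj : j < G.stopN d0) :
    G.dtail (G.seq d0 (j + 1)) = G.dhead (G.seq d0 j) := by
  rw [G.seq_succ]
  exact G.nxt_tail (G.stopN_min hd0 hj)

lemma seq_nonback {j : ℕ} (hj : j < G.stopN d0) :
    G.seq d0 (j + 1) ≠ G.dinv (G.seq d0 j) := by
  rw [G.seq_succ]
  exact G.nxt_ne_dinv (G.stopN_min hd0 hj)

lemma seq_tail_deg2 {j : ℕ} (h1 : 1 ≤ j) (h2 : j ≤ G.stopN d0) :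
    G.deg (G.dtail (G.seq d0 j)) = 2 := by
  obtain ⟨k, rfl⟩ := Nat.exists_eq_add_of_le h1
  rw [Nat.add_comm, G.seq_walk hd0 (by omega)]
  exact G.stopN_min hd0 (by omega)

lemma seq_inj {j k : ℕ} (hj : j ≤ G.stopN d0) (hk : k ≤ G.stopN d0)
    (h : G.seq d0 j = G.seq d0 k) : j = k := by
  induction j generalizing k with
  | zero =>
    by_contra hne
    have : G.deg (G.dtail (G.seq d0 k)) = 2 :=
      G.seq_tail_deg2 hd0 (by omega) hk
    rw [← h, G.seq_zero] at this
    exact hd0 this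
  | succ m ih =>
    cases k with
    | zero =>
      exfalso
      have : G.deg (G.dtail (G.seq d0 (m + 1))) = 2 :=
        G.seq_tail_deg2 hd0 (by omega) hj
      rw [h, G.seq_zero] at this
      exact hd0 this
    | succ l =>
      rw [G.seq_succ, G.seq_succ] at h
      have := G.nxt_inj (G.stopN_min hd0 (by omega)) (G.stopN_min hd0 (by omega)) h
      exact congrArg Nat.succ (ih (by omega) (by omega) this)

lemma seq_succ_eq_dinv {k : ℕ} (hk : k < G.stopN d0) :
    G.nxt (G.dinv (G.seq d0 (k + 1))) = G.dinv (G.seq d0 k) := by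
  rw [G.seq_succ]
  exact G.nxt_rev (G.stopN_min hd0 hk)

lemma seq_ne_dinv : ∀ g j k : ℕ, j + g = k → k ≤ G.stopN d0 →
    G.seq d0 j ≠ G.dinv (G.seq d0 k) := by
  intro g
  induction g using Nat.strong_induction_on with
  | _ g ih =>
    intro j k hjk hk h
    match g, hjk with
    | 0, rfl => exact G.ne_dinv _ h
    | 1, rfl =>
      apply G.seq_nonback hd0 (j := j) (by omega)
      rw [h, G.dinv_dinv]
    | (g' + 2), rfl =>
      have hstep : G.seq d0 (j + 1) = G.dinv (G.seq d0 (j + g' + 1)) := by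
        rw [G.seq_succ, h]
        have e2 : j + (g' + 2) = (j + g' + 1) + 1 := by omega
        rw [e2]
        exact G.seq_succ_eq_dinv hd0 (by omega)
      exact ih g' (by omega) (j + 1) (j + g' + 1) (by omega) (by omega) hstep

lemma seq_ne_dinv' {j k : ℕ} (hjk : j ≤ k) (hk : k ≤ G.stopN d0) :
    G.seq d0 j ≠ G.dinv (G.seq d0 k) :=
  G.seq_ne_dinv hd0 (k - j) j k (by omega) hk

lemma seq_fst_inj {j k : ℕ} (hj : j ≤ G.stopN d0) (hk : k ≤ G.stopN d0)
    (h : (G.seq d0 j).1 = (G.seq d0 k).1) : j = k := by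
  rcases G.eq_or_dinv_of_fst_eq h with h' | h'
  · exact G.seq_inj hd0 hj hk h'
  · exfalso
    rcases Nat.le_total j k with hle | hle
    · exact G.seq_ne_dinv' hd0 hle hk h'
    · refine G.seq_ne_dinv' hd0 hle hj ?_
      rw [h', G.dinv_dinv]

end Trail

section Cross

variable {a b : G.Dir} (ha : G.deg (G.dtail a) ≠ 2) (hb : G.deg (G.dtail b) ≠ 2)
  (hab : a ≠ b) (hb2 : b ≠ G.dinv (G.seq a (G.stopN a)))

include ha hb hab hb2

lemma cross_ne : ∀ j k : ℕ, j ≤ G.stopN a → k ≤ G.stopN b →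
    G.seq a j ≠ G.seq b k := by
  intro j
  induction j with
  | zero =>
    intro k hj hk h
    cases k with
    | zero => exact hab h
    | succ l =>
      apply hb
      have := G.seq_tail_deg2 hb (j := l + 1) (by omega) hk
      rw [← h, G.seq_zero] at this
      exact absurd this ha
  | succ m ih =>
    intro k hj hk h
    cases k with
    | zero =>
      apply hb
      have := G.seq_tail_deg2 ha (j := m + 1) (by omega) hj
      rw [h, G.seq_zero] at this
      exact absurd this hb
    | succ l =>
      rw [G.seq_succ, G.seq_succ] at h
      have := G.nxt_inj (G.stopN_min (d0 := a) ha (j := m) (by omega))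
        (G.stopN_min (d0 := b) hb (j := l) (by omega)) h
      exact ih l (by omega) (by omega) this

lemma cross_ne_dinv : ∀ k j : ℕ, j ≤ G.stopN a → k ≤ G.stopN b →
    G.seq a j ≠ G.dinv (G.seq b k) := by
  intro k
  induction k with
  | zero =>
    intro j hj hk h
    apply hb2
    have hbe : b = G.dinv (G.seq a j) := by
      rw [h, G.dinv_dinv]
      exact (G.seq_zero b).symm
    have hdeg : G.deg (G.dhead (G.seq a j)) ≠ 2 := by
      rw [← G.dtail_dinv, ← hbe]
      exact hb
    have hjN : j = G.stopN a := by
      rcases Nat.lt_or_ge j (G.stopN a) with hlt | hge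
      · exact absurd (G.stopN_min ha hlt) hdeg
      · omega
    rw [hbe, hjN]
  | succ l ih =>
    intro j hj hk h
    have hdeg : G.deg (G.dhead (G.seq a j)) = 2 := by
      have h1 : G.dhead (G.dinv (G.seq b (l + 1))) = G.dtail (G.seq b (l + 1)) :=
        G.dhead_dinv _
      rw [h, h1, G.seq_walk hb (by omega)]
      exact G.stopN_min hb (by omega)
    have hjN : j < G.stopN a := by
      rcases Nat.lt_or_ge j (G.stopN a) with hlt | hge
      · exact hlt
      · exfalso
        have : j = G.stopN a := by omega
        rw [this] at hdeg
        exact G.stopN_spec ha hdeg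
    have hstep : G.seq a (j + 1) = G.dinv (G.seq b l) := by
      rw [G.seq_succ, h]
      exact G.seq_succ_eq_dinv hb (by omega)
    exact ih (j + 1) (by omega) (by omega) hstep

lemma cross_fst_ne {j k : ℕ} (hj : j ≤ G.stopN a) (hk : k ≤ G.stopN b) :
    (G.seq a j).1 ≠ (G.seq b k).1 := by
  intro h
  rcases G.eq_or_dinv_of_fst_eq h with h' | h'
  · exact G.cross_ne ha hb hab hb2 j k hj hk h'
  · exact G.cross_ne_dinv ha hb hab hb2 k j hj hk h'

end Cross

end MGraph
namespace MGraph

variable (G : MGraph) [Finite G.V] [Finite G.E]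

/-- The trail starting from `d0`, as a list. -/
noncomputable def trail (d0 : G.Dir) : List G.Dir :=
  (List.range (G.stopN d0 + 1)).map (G.seq d0)

lemma mem_trail {d0 d : G.Dir} :
    d ∈ G.trail d0 ↔ ∃ j ≤ G.stopN d0, G.seq d0 j = d := by
  simp only [trail, List.mem_map, List.mem_range]
  constructor
  · rintro ⟨j, hj, rfl⟩; exact ⟨j, by omega, rfl⟩
  · rintro ⟨j, hj, rfl⟩; exact ⟨j, by omega, rfl⟩

lemma trail_ne_nil (d0 : G.Dir) : G.trail d0 ≠ [] := by
  simp [trail, List.range_succ]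

lemma trail_head? (d0 : G.Dir) : (G.trail d0).head? = some d0 := by
  rw [trail, List.range_succ_eq_map]
  simp [G.seq_zero]

lemma trail_getLast? (d0 : G.Dir) :
    (G.trail d0).getLast? = some (G.seq d0 (G.stopN d0)) := by
  rw [trail, List.range_succ]
  simp

lemma trail_wstart (d0 : G.Dir) :
    G.wstart (G.trail d0) = some (G.dtail d0) := by
  rw [wstart, trail_head?]; rfl

lemma trail_wend (d0 : G.Dir) :
    G.wend (G.trail d0) = some (G.dhead (G.seq d0 (G.stopN d0))) := by
  rw [wend, trail_getLast?]; rfl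

section WithStart

variable {d0 : G.Dir} (hd0 : G.deg (G.dtail d0) ≠ 2)

include hd0

lemma trail_isWalk : G.IsWalk (G.trail d0) := by
  rw [IsWalk, trail, List.Chain', List.isChain_map, List.isChain_range_succ]
  intro m hm
  exact (G.seq_walk hd0 hm).symm

lemma trail_nonback : G.NonBack (G.trail d0) := by
  rw [NonBack, trail, List.Chain', List.isChain_map, List.isChain_range_succ]
  intro m hm
  exact G.seq_nonback hd0 hm

lemma trail_nodup : (G.trail d0).Nodup := by
  refine List.Nodup.map_on ?_ List.nodup_range
  intro j hj k hk h
  rw [List.mem_range] at hj hk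
  exact G.seq_inj hd0 (by omega) (by omega) h

lemma trail_not_both {e : G.E} :
    ¬((e, true) ∈ G.trail d0 ∧ (e, false) ∈ G.trail d0) := by
  rintro ⟨h1, h2⟩
  rw [G.mem_trail] at h1 h2
  obtain ⟨j, hj, hj'⟩ := h1
  obtain ⟨k, hk, hk'⟩ := h2
  have : j = k := by
    refine G.seq_fst_inj hd0 hj hk ?_
    rw [hj', hk']
  rw [this, hk'] at hj'
  simp at hj'

end WithStart

lemma cnt_le_one_of_nodup {w : List G.Dir} (h : w.Nodup) (d : G.Dir) :
    G.cnt w d ≤ 1 := by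
  letI := Classical.decEq G.Dir
  exact List.nodup_iff_count_le_one.mp h d

lemma cnt_eq_zero_of_not_mem {w : List G.Dir} {d : G.Dir} (h : d ∉ w) :
    G.cnt w d = 0 := by
  letI := Classical.decEq G.Dir
  exact @List.count_eq_zero_of_not_mem _ instBEqOfDecidableEq instLawfulBEq _ _ h

lemma edgesDistinct_of_nodup {w : List G.Dir} (hnd : w.Nodup)
    (hnb : ∀ e : G.E, ¬((e, true) ∈ w ∧ (e, false) ∈ w)) :
    G.EdgesDistinct w := by
  intro e
  by_cases h1 : (e, true) ∈ w
  · have h2 : (e, false) ∉ w := fun h2 => hnb e ⟨h1, h2⟩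
    rw [G.cnt_eq_zero_of_not_mem h2]
    simpa using G.cnt_le_one_of_nodup hnd (e, true)
  · rw [G.cnt_eq_zero_of_not_mem h1]
    simpa using G.cnt_le_one_of_nodup hnd (e, false)

section WithStart2

variable {d0 : G.Dir} (hd0 : G.deg (G.dtail d0) ≠ 2)

include hd0

lemma trail_edgesDistinct : G.EdgesDistinct (G.trail d0) :=
  G.edgesDistinct_of_nodup (G.trail_nodup hd0) (fun _ => G.trail_not_both hd0)

/-- If a degree-2 vertex is visited by a trail, it is the head of some
non-final directed edge of the trail. -/
lemma trail_vtx_deg2 {x : G.V} (h2 : G.deg x = 2) (hv : G.vtxIn (G.trail d0) x) :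
    ∃ j < G.stopN d0, G.dhead (G.seq d0 j) = x := by
  rcases hv with ⟨d, hd, hdx⟩ | ⟨d, hd, hdx⟩
  · rw [G.mem_trail] at hd
    obtain ⟨j, hj, rfl⟩ := hd
    cases j with
    | zero =>
      exfalso
      rw [G.seq_zero] at hdx
      rw [hdx] at hd0
      exact hd0 h2
    | succ m =>
      refine ⟨m, by omega, ?_⟩
      rw [← G.seq_walk hd0 (by omega), hdx]
  · rw [G.mem_trail] at hd
    obtain ⟨j, hj, rfl⟩ := hd
    have hjlt : j < G.stopN d0 := by
      rcases Nat.lt_or_ge j (G.stopN d0) with h | h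
      · exact h
      · exfalso
        have : j = G.stopN d0 := by omega
        rw [this] at hdx
        rw [← hdx] at h2
        exact G.stopN_spec hd0 h2
    exact ⟨j, hjlt, hdx⟩

lemma trail_vtx_cases {x : G.V} (hv : G.vtxIn (G.trail d0) x) :
    G.deg x = 2 ∨ x = G.dtail d0 ∨ x = G.dhead (G.seq d0 (G.stopN d0)) := by
  by_cases h2 : G.deg x = 2
  · exact Or.inl h2
  rcases hv with ⟨d, hd, hdx⟩ | ⟨d, hd, hdx⟩ <;> rw [G.mem_trail] at hd
  · obtain ⟨j, hj, rfl⟩ := hd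
    cases j with
    | zero => exact Or.inr (Or.inl (by rw [← hdx, G.seq_zero]))
    | succ m =>
      exfalso
      exact h2 (by rw [← hdx]; exact G.seq_tail_deg2 hd0 (by omega) hj)
  · obtain ⟨j, hj, rfl⟩ := hd
    have : j = G.stopN d0 := by
      rcases Nat.lt_or_ge j (G.stopN d0) with h | h
      · exact absurd (hdx ▸ G.stopN_min hd0 h) h2
      · omega
    exact Or.inr (Or.inr (by rw [← hdx, this]))

/-- At an interior (degree-2) vertex of a trail, every directed edge with that
tail belongs to the trail's pair. -/
lemma trail_deg2_dirs {j : ℕ} (hj : j < G.stopN d0) {c : G.Dir}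
    (hc : G.dtail c = G.dhead (G.seq d0 j)) :
    c = G.seq d0 (j + 1) ∨ c = G.dinv (G.seq d0 j) := by
  by_cases hcd : c = G.dinv (G.seq d0 j)
  · exact Or.inr hcd
  · left
    exact G.deg_two_unique (G.stopN_min hd0 hj) (G.dtail_dinv _) hc
      (G.seq_walk hd0 hj) hcd (G.seq_nonback hd0 hj)

end WithStart2

end MGraph
namespace MGraph

variable (G : MGraph) [Finite G.V] [Finite G.E]

lemma deg_pos_of_head {v : G.V} {d : G.Dir} (h : G.dhead d = v) : G.deg v ≠ 0 := by
  intro h0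
  rw [deg, Nat.card_eq_zero] at h0
  rcases h0 with he | hi
  · exact he.elim ⟨G.dinv d, by rw [G.dtail_dinv, h]⟩
  · exact (Finite.not_infinite (by infer_instance)) hi

lemma deg_pos_of_tail {v : G.V} {d : G.Dir} (h : G.dtail d = v) : G.deg v ≠ 0 := by
  apply G.deg_pos_of_head (d := G.dinv d)
  rw [G.dhead_dinv, h]

lemma deg_ge_two (hconn : G.Connected) (hleaf : ∀ v : G.V, G.deg v ≠ 1)
    (hE : Nonempty G.E) : ∀ v : G.V, 2 ≤ G.deg v := by
  intro v
  have h0 : G.deg v ≠ 0 := by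
    obtain ⟨e⟩ := hE
    have hw := hconn.2 (G.dtail (e, true)) v
    rcases Relation.ReflTransGen.cases_tail hw with h | ⟨c, -, hcv⟩
    · exact G.deg_pos_of_tail h.symm
    · obtain ⟨d, -, hd2⟩ := hcv
      exact G.deg_pos_of_head hd2
  have h1 := hleaf v
  omega

lemma card_E_eq (hchi : G.eulerChar = -1) : Nat.card G.E = Nat.card G.V + 1 := by
  rw [eulerChar] at hchi
  omega

lemma sum_deg : ∑ᶠ v : G.V, G.deg v = 2 * Nat.card G.E := by
  classical
  have hV := Fintype.ofFinite G.V
  have hE := Fintype.ofFinite G.E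
  have hD : Fintype G.Dir := by unfold Dir; infer_instance
  have e1 : Fintype.card G.Dir = ∑ v : G.V, Fintype.card {d : G.Dir // G.dtail d = v} := by
    rw [← Fintype.card_sigma]
    exact (Fintype.card_congr (Equiv.sigmaFiberEquiv G.dtail)).symm
  have e2 : ∀ v : G.V, Fintype.card {d : G.Dir // G.dtail d = v} = G.deg v := by
    intro v
    rw [deg, Nat.card_eq_fintype_card]
  have e3 : Nat.card G.Dir = 2 * Nat.card G.E := by
    show Nat.card (G.E × Bool) = _
    rw [Nat.card_prod]
    have : Nat.card Bool = 2 := by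
      rw [Nat.card_eq_fintype_card, Fintype.card_bool]
    rw [this]
    ring
  rw [finsum_eq_sum_of_fintype]
  calc ∑ v : G.V, G.deg v
      = ∑ v : G.V, Fintype.card {d : G.Dir // G.dtail d = v} :=
        Finset.sum_congr rfl (fun v _ => (e2 v).symm)
    _ = Fintype.card G.Dir := e1.symm
    _ = Nat.card G.Dir := Nat.card_eq_fintype_card.symm
    _ = 2 * Nat.card G.E := e3

/-- Degree classification for connected graphs with Euler characteristic -1. -/
lemma degree_classification (hconn : G.Connected) (hleaf : ∀ v : G.V, G.deg v ≠ 1)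
    (hchi : G.eulerChar = -1) :
    (∃ v : G.V, G.deg v = 4 ∧ ∀ w : G.V, w ≠ v → G.deg w = 2) ∨
    (∃ u v : G.V, u ≠ v ∧ G.deg u = 3 ∧ G.deg v = 3 ∧
      ∀ w : G.V, w ≠ u → w ≠ v → G.deg w = 2) := by
  classical
  have hV := Fintype.ofFinite G.V
  have hcE := G.card_E_eq hchi
  have hEne : Nonempty G.E := by
    have : 0 < Nat.card G.E := by
      rw [hcE]; omega
    rw [Nat.card_pos_iff] at this
    exact this.1
  have hdeg2 := G.deg_ge_two hconn hleaf hEne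
  have hsum : ∑ v : G.V, G.deg v = 2 * Nat.card G.V + 2 := by
    have := G.sum_deg
    rw [finsum_eq_sum_of_fintype] at this
    rw [this, hcE]
    ring
  set f : G.V → ℕ := fun v => G.deg v - 2 with hf
  have hsumf : ∑ v : G.V, f v = 2 := by
    have h1 : ∑ v : G.V, (f v + 2) = ∑ v : G.V, G.deg v := by
      refine Finset.sum_congr rfl (fun v _ => ?_)
      have := hdeg2 v
      simp only [hf]
      omega
    rw [Finset.sum_add_distrib, Finset.sum_const, Finset.card_univ] at h1
    rw [Nat.card_eq_fintype_card] at hsum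
    simp only [smul_eq_mul] at h1
    omega
  -- find a vertex with positive excess
  have hex : ∃ a : G.V, 1 ≤ f a := by
    by_contra h
    push_neg at h
    have : ∑ v : G.V, f v = 0 := Finset.sum_eq_zero (fun v _ => by have := h v; omega)
    omega
  obtain ⟨a, ha⟩ := hex
  have hsplit : f a + ∑ v ∈ Finset.univ.erase a, f v = 2 := by
    rw [Finset.add_sum_erase _ f (Finset.mem_univ a)]
    exact hsumf
  have hfa_le : f a ≤ 2 := by
    have := Finset.single_le_sum (f := f) (fun v _ => Nat.zero_le _) (Finset.mem_univ a)
    omega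
  rcases Nat.lt_or_ge (f a) 2 with hfa | hfa
  · -- f a = 1 : two vertices of degree 3
    have hfa1 : f a = 1 := by omega
    have hrest : ∑ v ∈ Finset.univ.erase a, f v = 1 := by omega
    have hex2 : ∃ b ∈ Finset.univ.erase a, 1 ≤ f b := by
      by_contra h
      push_neg at h
      have : ∑ v ∈ Finset.univ.erase a, f v = 0 :=
        Finset.sum_eq_zero (fun v hv => by have := h v hv; omega)
      omega
    obtain ⟨b, hb, hb1⟩ := hex2
    have hba : b ≠ a := (Finset.mem_erase.mp hb).1
    have hsplit2 : f b + ∑ v ∈ (Finset.univ.erase a).erase b, f v = 1 := by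
      rw [Finset.add_sum_erase _ f hb]
      exact hrest
    have hfb1 : f b = 1 := by
      have := Finset.single_le_sum (f := f) (fun v _ => Nat.zero_le _) hb
      omega
    have hrest2 : ∑ v ∈ (Finset.univ.erase a).erase b, f v = 0 := by omega
    right
    refine ⟨a, b, Ne.symm hba, ?_, ?_, ?_⟩
    · have := hdeg2 a; simp only [hf] at hfa1; omega
    · have := hdeg2 b; simp only [hf] at hfb1; omega
    · intro w hwa hwb
      have hw : w ∈ (Finset.univ.erase a).erase b :=
        Finset.mem_erase.mpr ⟨hwb, Finset.mem_erase.mpr ⟨hwa, Finset.mem_univ w⟩⟩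
      have := (Finset.sum_eq_zero_iff).mp hrest2 w hw
      have := hdeg2 w
      simp only [hf] at *
      omega
  · -- f a = 2 : one vertex of degree 4
    have hfa2 : f a = 2 := by omega
    have hrest : ∑ v ∈ Finset.univ.erase a, f v = 0 := by omega
    left
    refine ⟨a, ?_, ?_⟩
    · have := hdeg2 a; simp only [hf] at hfa2; omega
    · intro w hwa
      have hw : w ∈ Finset.univ.erase a := Finset.mem_erase.mpr ⟨hwa, Finset.mem_univ w⟩
      have := (Finset.sum_eq_zero_iff).mp hrest w hw
      have := hdeg2 w
      simp only [hf] at *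
      omega

end MGraph
namespace MGraph

lemma list_cover {α : Type} [Finite α] (l : List α) (hnd : l.Nodup)
    (hlen : Nat.card α ≤ l.length) : ∀ x : α, x ∈ l := by
  classical
  have := Fintype.ofFinite α
  rw [Nat.card_eq_fintype_card] at hlen
  have h1 : l.toFinset.card = l.length := List.toFinset_card_of_nodup hnd
  have h2 : l.toFinset = Finset.univ := by
    apply Finset.eq_univ_of_card
    have h3 := Finset.card_le_univ l.toFinset
    omega
  intro x
  have : x ∈ l.toFinset := h2 ▸ Finset.mem_univ x
  simpa using this

variable (G : MGraph) [Finite G.V] [Finite G.E]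

lemma deg_three_cover {v : G.V} (h : G.deg v = 3) {a b c : G.Dir}
    (ha : G.dtail a = v) (hb : G.dtail b = v) (hc : G.dtail c = v)
    (hab : a ≠ b) (hac : a ≠ c) (hbc : b ≠ c) :
    ∀ x : G.Dir, G.dtail x = v → x = a ∨ x = b ∨ x = c := by
  intro x hx
  have := list_cover (α := {d : G.Dir // G.dtail d = v})
    [⟨a, ha⟩, ⟨b, hb⟩, ⟨c, hc⟩]
    (by simp [Subtype.ext_iff]; tauto)
    (by rw [← deg, h]; simp)
    ⟨x, hx⟩
  simpa [Subtype.ext_iff] using this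

lemma deg_four_cover {v : G.V} (h : G.deg v = 4) {a b c d : G.Dir}
    (ha : G.dtail a = v) (hb : G.dtail b = v) (hc : G.dtail c = v)
    (hd : G.dtail d = v)
    (hab : a ≠ b) (hac : a ≠ c) (had : a ≠ d)
    (hbc : b ≠ c) (hbd : b ≠ d) (hcd : c ≠ d) :
    ∀ x : G.Dir, G.dtail x = v → x = a ∨ x = b ∨ x = c ∨ x = d := by
  intro x hx
  have := list_cover (α := {d : G.Dir // G.dtail d = v})
    [⟨a, ha⟩, ⟨b, hb⟩, ⟨c, hc⟩, ⟨d, hd⟩]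
    (by simp [Subtype.ext_iff]; tauto)
    (by rw [← deg, h]; simp)
    ⟨x, hx⟩
  simpa [Subtype.ext_iff] using this

end MGraph
namespace MGraph

lemma exists_third {α : Type} [Finite α] (h : 3 ≤ Nat.card α) (p q : α) :
    ∃ x : α, x ≠ p ∧ x ≠ q := by
  classical
  by_contra h'
  push_neg at h'
  have := Fintype.ofFinite α
  rw [Nat.card_eq_fintype_card] at h
  have hsub : (Finset.univ : Finset α) ⊆ {p, q} := by
    intro x _
    by_cases hxp : x = p
    · simp [hxp]
    · simp [h' x hxp]
  have := Finset.card_le_card hsub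
  have h2 : ({p, q} : Finset α).card ≤ 2 :=
    (Finset.card_insert_le _ _).trans (by simp)
  rw [Finset.card_univ] at this
  omega

lemma nonempty_of_card_pos {α : Type} [Finite α] (h : 1 ≤ Nat.card α) :
    Nonempty α :=
  (Nat.card_pos_iff.mp (by omega)).1

variable (G : MGraph) [Finite G.V] [Finite G.E]

lemma exists_dir_at {v : G.V} (h : G.deg v ≠ 0) : ∃ d : G.Dir, G.dtail d = v := by
  have : 1 ≤ Nat.card {d : G.Dir // G.dtail d = v} := by
    rw [← deg] at *
    omega
  obtain ⟨⟨d, hd⟩⟩ := nonempty_of_card_pos this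
  exact ⟨d, hd⟩

section Assemble

variable {d0 : G.Dir} (hd0 : G.deg (G.dtail d0) ≠ 2)

lemma d0_mem_trail : d0 ∈ G.trail d0 :=
  G.mem_trail.mpr ⟨0, Nat.zero_le _, G.seq_zero d0⟩

lemma last_mem_trail : G.seq d0 (G.stopN d0) ∈ G.trail d0 :=
  G.mem_trail.mpr ⟨G.stopN d0, le_refl _, rfl⟩

include hd0

lemma trail_isPath :
    G.IsPathBetween (G.dtail d0) (G.dhead (G.seq d0 (G.stopN d0))) (G.trail d0) :=
  ⟨G.trail_isWalk hd0, G.trail_nonback hd0, G.trail_wstart d0, G.trail_wend d0,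
    G.trail_edgesDistinct hd0⟩

lemma trail_isCycle (hcyc : G.dhead (G.seq d0 (G.stopN d0)) = G.dtail d0) :
    G.IsCycleAt (G.dtail d0) (G.trail d0) := by
  refine ⟨G.trail_isWalk hd0, G.trail_nonback hd0, G.trail_wstart d0, ?_, 
    G.trail_edgesDistinct hd0, ?_⟩
  · rw [G.trail_wend d0, hcyc]
  · intro a b hha hlb
    rw [G.trail_head? d0] at hha
    rw [G.trail_getLast? d0] at hlb
    injection hha with hha
    injection hlb with hlb
    subst hha; subst hlb
    intro h
    exact G.seq_ne_dinv' hd0 (Nat.zero_le _) (le_refl _)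
      (by rw [← h, G.seq_zero])

lemma edgeIn_trail {e : G.E} :
    G.edgeIn (G.trail d0) e ↔ ∃ j ≤ G.stopN d0, (G.seq d0 j).1 = e := by
  constructor
  · rintro (h | h) <;> rw [G.mem_trail] at h <;>
      obtain ⟨j, hj, hj'⟩ := h <;> exact ⟨j, hj, by rw [hj']⟩
  · rintro ⟨j, hj, hj'⟩
    have hm : G.seq d0 j ∈ G.trail d0 := G.mem_trail.mpr ⟨j, hj, rfl⟩
    rcases hb : (G.seq d0 j).2 with _ | _
    · right
      have : G.seq d0 j = (e, false) := Prod.ext hj' hb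
      rwa [this] at hm
    · left
      have : G.seq d0 j = (e, true) := Prod.ext hj' hb
      rwa [this] at hm

end Assemble

section Disjoint

variable {a b : G.Dir} (ha : G.deg (G.dtail a) ≠ 2) (hb : G.deg (G.dtail b) ≠ 2)
  (hab : a ≠ b) (hb2 : b ≠ G.dinv (G.seq a (G.stopN a)))

include ha hb hab hb2

lemma trail_edge_disjoint : ∀ e : G.E,
    ¬(G.edgeIn (G.trail a) e ∧ G.edgeIn (G.trail b) e) := by
  rintro e ⟨h1, h2⟩
  rw [G.edgeIn_trail ha] at h1
  rw [G.edgeIn_trail hb] at h2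
  obtain ⟨j, hj, hj'⟩ := h1
  obtain ⟨k, hk, hk'⟩ := h2
  exact G.cross_fst_ne ha hb hab hb2 hj hk (by rw [hj', hk'])

lemma trail_vtx_disjoint {x : G.V} (h2 : G.deg x = 2)
    (hxa : G.vtxIn (G.trail a) x) (hxb : G.vtxIn (G.trail b) x) : False := by
  obtain ⟨j, hj, hj'⟩ := G.trail_vtx_deg2 ha h2 hxa
  obtain ⟨k, hk, hk'⟩ := G.trail_vtx_deg2 hb h2 hxb
  have htl : G.dtail (G.seq b (k + 1)) = G.dhead (G.seq a j) := by
    rw [G.seq_walk hb hk, hk', hj']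
  rcases G.trail_deg2_dirs ha hj htl with h | h
  · exact G.cross_ne ha hb hab hb2 (j + 1) (k + 1) (by omega) (by omega) h.symm
  · refine G.cross_ne_dinv ha hb hab hb2 (k + 1) j (by omega) (by omega) ?_
    rw [← G.dinv_dinv (G.seq a j), ← h]

end Disjoint

lemma reach_all (hconn : G.Connected) (P : G.V → Prop)
    (hP : ∀ x y : G.V, P x → G.adj x y → P y) {v0 : G.V} (hv0 : P v0) :
    ∀ x : G.V, P x := by
  intro x
  induction hconn.2 v0 x with
  | refl => exact hv0
  | tail _ step ih => exact hP _ _ ih step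

lemma vtxIn_of_mem_tail {w : List G.Dir} {d : G.Dir} (hd : d ∈ w) :
    G.vtxIn w (G.dtail d) := Or.inl ⟨d, hd, rfl⟩

lemma vtxIn_of_mem_head {w : List G.Dir} {d : G.Dir} (hd : d ∈ w) :
    G.vtxIn w (G.dhead d) := Or.inr ⟨d, hd, rfl⟩

lemma edgeIn_of_mem {w : List G.Dir} {d : G.Dir} (hd : d ∈ w) :
    G.edgeIn w d.1 := by
  rcases hb : d.2 with _ | _
  · exact Or.inr (by rwa [show (d.1, false) = d from Prod.ext rfl hb.symm])
  · exact Or.inl (by rwa [show (d.1, true) = d from Prod.ext rfl hb.symm])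

lemma edgeIn_of_dinv_mem {w : List G.Dir} {d : G.Dir} (hd : G.dinv d ∈ w) :
    G.edgeIn w d.1 := by
  have := G.edgeIn_of_mem hd
  rwa [G.fst_dinv] at this

end MGraph
namespace MGraph

variable (G : MGraph) [Finite G.V] [Finite G.E]

lemma figureEight_of_deg4 (hconn : G.Connected) {v : G.V} (hv4 : G.deg v = 4)
    (hrest : ∀ w : G.V, w ≠ v → G.deg w = 2) : G.IsFigureEight := by
  have honly : ∀ x : G.V, G.deg x ≠ 2 → x = v := by
    intro x hx
    by_contra h
    exact hx (hrest x h)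
  obtain ⟨d₁, hd₁⟩ := G.exists_dir_at (v := v) (by omega)
  have ha : G.deg (G.dtail d₁) ≠ 2 := by rw [hd₁]; omega
  have hend₁ : G.dhead (G.seq d₁ (G.stopN d₁)) = v := honly _ (G.stopN_spec ha)
  have hcard : 3 ≤ Nat.card {d : G.Dir // G.dtail d = v} := by rw [← deg]; omega
  obtain ⟨⟨d₂, hd₂⟩, hne1, hne2⟩ := exists_third hcard ⟨d₁, hd₁⟩
    ⟨G.dinv (G.seq d₁ (G.stopN d₁)), by rw [G.dtail_dinv, hend₁]⟩
  rw [ne_eq, Subtype.mk.injEq] at hne1 hne2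
  have hb : G.deg (G.dtail d₂) ≠ 2 := by rw [hd₂]; omega
  have hend₂ : G.dhead (G.seq d₂ (G.stopN d₂)) = v := honly _ (G.stopN_spec hb)
  have hab : d₁ ≠ d₂ := Ne.symm hne1
  have hb2 : d₂ ≠ G.dinv (G.seq d₁ (G.stopN d₁)) := hne2
  -- the two cycles
  have hc₁ : G.IsCycleAt v (G.trail d₁) := by
    have := G.trail_isCycle ha (by rw [hend₁, hd₁])
    rwa [hd₁] at this
  have hc₂ : G.IsCycleAt v (G.trail d₂) := by
    have := G.trail_isCycle hb (by rw [hend₂, hd₂])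
    rwa [hd₂] at this
  have hdisj := G.trail_edge_disjoint ha hb hab hb2
  -- vertex intersection
  have hvtx : ∀ x : G.V, G.vtxIn (G.trail d₁) x → G.vtxIn (G.trail d₂) x → x = v := by
    intro x hx1 hx2
    rcases G.trail_vtx_cases ha hx1 with h2 | h | h
    · exact absurd (G.trail_vtx_disjoint ha hb hab hb2 h2 hx1 hx2) not_false
    · rw [h, hd₁]
    · rw [h, hend₁]
  -- coverage
  set P : G.V → Prop := fun x => G.vtxIn (G.trail d₁) x ∨ G.vtxIn (G.trail d₂) x with hP
  have hfiber : ∀ x : G.V, P x → ∀ d : G.Dir, G.dtail d = x →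
      d ∈ G.trail d₁ ∨ G.dinv d ∈ G.trail d₁ ∨ d ∈ G.trail d₂ ∨ G.dinv d ∈ G.trail d₂ := by
    intro x hx d hdx
    by_cases h2 : G.deg x = 2
    · rcases hx with hx | hx
      · obtain ⟨j, hj, hj'⟩ := G.trail_vtx_deg2 ha h2 hx
        rcases G.trail_deg2_dirs ha hj (by rw [hdx, ← hj']) with h | h
        · exact Or.inl (G.mem_trail.mpr ⟨j + 1, by omega, h.symm⟩)
        · refine Or.inr (Or.inl (G.mem_trail.mpr ⟨j, by omega, ?_⟩))
          rw [h, G.dinv_dinv]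
      · obtain ⟨j, hj, hj'⟩ := G.trail_vtx_deg2 hb h2 hx
        rcases G.trail_deg2_dirs hb hj (by rw [hdx, ← hj']) with h | h
        · exact Or.inr (Or.inr (Or.inl (G.mem_trail.mpr ⟨j + 1, by omega, h.symm⟩)))
        · refine Or.inr (Or.inr (Or.inr (G.mem_trail.mpr ⟨j, by omega, ?_⟩)))
          rw [h, G.dinv_dinv]
    · have hxv : x = v := honly x h2
      subst hxv
      have h12 : d₁ ≠ G.dinv (G.seq d₁ (G.stopN d₁)) := by
        have := G.seq_ne_dinv' ha (Nat.zero_le (G.stopN d₁)) (le_refl _)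
        rwa [G.seq_zero] at this
      have h14 : d₁ ≠ G.dinv (G.seq d₂ (G.stopN d₂)) := by
        have := G.cross_ne_dinv ha hb hab hb2 (G.stopN d₂) 0 (Nat.zero_le _) (le_refl _)
        rwa [G.seq_zero] at this
      have h24 : G.dinv (G.seq d₁ (G.stopN d₁)) ≠ G.dinv (G.seq d₂ (G.stopN d₂)) := by
        intro h
        exact G.cross_ne ha hb hab hb2 (G.stopN d₁) (G.stopN d₂) (le_refl _) (le_refl _)
          (G.dinv_injective h)
      have h34 : d₂ ≠ G.dinv (G.seq d₂ (G.stopN d₂)) := by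
        have := G.seq_ne_dinv' hb (Nat.zero_le (G.stopN d₂)) (le_refl _)
        rwa [G.seq_zero] at this
      rcases G.deg_four_cover hv4 hd₁ (by rw [G.dtail_dinv, hend₁]) hd₂
        (by rw [G.dtail_dinv, hend₂]) h12 hab h14 (Ne.symm hne2) h24 h34 d hdx with
        h | h | h | h
      · exact Or.inl (h ▸ G.d0_mem_trail)
      · refine Or.inr (Or.inl ?_)
        rw [h, G.dinv_dinv]
        exact G.last_mem_trail
      · exact Or.inr (Or.inr (Or.inl (h ▸ G.d0_mem_trail)))
      · refine Or.inr (Or.inr (Or.inr ?_))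
        rw [h, G.dinv_dinv]
        exact G.last_mem_trail
  have hstep : ∀ x y : G.V, P x → G.adj x y → P y := by
    rintro x y hx ⟨d, hdt, hdh⟩
    rcases hfiber x hx d hdt with h | h | h | h
    · exact Or.inl (hdh ▸ G.vtxIn_of_mem_head h)
    · refine Or.inl ?_
      have := G.vtxIn_of_mem_tail h
      rwa [G.dtail_dinv, hdh] at this
    · exact Or.inr (hdh ▸ G.vtxIn_of_mem_head h)
    · refine Or.inr ?_
      have := G.vtxIn_of_mem_tail h
      rwa [G.dtail_dinv, hdh] at this
  have hPv : P v := Or.inl (hd₁ ▸ G.vtxIn_of_mem_tail G.d0_mem_trail)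
  have hall := G.reach_all hconn P hstep hPv
  refine ⟨v, G.trail d₁, G.trail d₂, hc₁, hc₂, hdisj, hvtx, ?_⟩
  intro e
  rcases hfiber (G.dtail (e, true)) (hall _) (e, true) rfl with h | h | h | h
  · exact Or.inl (G.edgeIn_of_mem h)
  · exact Or.inl (G.edgeIn_of_dinv_mem h)
  · exact Or.inr (G.edgeIn_of_mem h)
  · exact Or.inr (G.edgeIn_of_dinv_mem h)

end MGraph
namespace MGraph

variable (G : MGraph) [Finite G.V] [Finite G.E]

lemma trail_fiber_step {d0 : G.Dir} (hd0 : G.deg (G.dtail d0) ≠ 2) {x : G.V}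
    (h2 : G.deg x = 2) (hx : G.vtxIn (G.trail d0) x) {d : G.Dir}
    (hdx : G.dtail d = x) : d ∈ G.trail d0 ∨ G.dinv d ∈ G.trail d0 := by
  obtain ⟨j, hj, hj'⟩ := G.trail_vtx_deg2 hd0 h2 hx
  rcases G.trail_deg2_dirs hd0 hj (by rw [hdx, ← hj']) with h | h
  · exact Or.inl (G.mem_trail.mpr ⟨j + 1, by omega, h.symm⟩)
  · refine Or.inr (G.mem_trail.mpr ⟨j, by omega, ?_⟩)
    rw [h, G.dinv_dinv]

lemma classify_deg3 (hconn : G.Connected) {u v : G.V} (huv : u ≠ v)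
    (hu3 : G.deg u = 3) (hv3 : G.deg v = 3)
    (hrest : ∀ w : G.V, w ≠ u → w ≠ v → G.deg w = 2) :
    G.IsBarbell ∨ G.IsTheta := by
  have honly : ∀ x : G.V, G.deg x ≠ 2 → x = u ∨ x = v := by
    intro x hx
    by_contra h
    push_neg at h
    exact hx (hrest x h.1 h.2)
  have hcardu : 3 ≤ Nat.card {d : G.Dir // G.dtail d = u} := by rw [← deg]; omega
  have hcardv : 3 ≤ Nat.card {d : G.Dir // G.dtail d = v} := by rw [← deg]; omega
  have hdegu : ∀ d : G.Dir, G.dtail d = u → G.deg (G.dtail d) ≠ 2 := by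
    intro d hd; rw [hd]; omega
  have hdegv : ∀ d : G.Dir, G.dtail d = v → G.deg (G.dtail d) ≠ 2 := by
    intro d hd; rw [hd]; omega
  by_cases hcyc : ∃ d : G.Dir, G.dtail d = u ∧ G.dhead (G.seq d (G.stopN d)) = u
  · -- Barbell case
    left
    obtain ⟨d₁, hd₁, hend₁⟩ := hcyc
    have ha := hdegu d₁ hd₁
    obtain ⟨⟨d₂, hd₂⟩, hne1, hne2⟩ := exists_third hcardu ⟨d₁, hd₁⟩
      ⟨G.dinv (G.seq d₁ (G.stopN d₁)), by rw [G.dtail_dinv, hend₁]⟩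
    rw [ne_eq, Subtype.mk.injEq] at hne1 hne2
    have hb := hdegu d₂ hd₂
    have hab : d₁ ≠ d₂ := Ne.symm hne1
    have h12a : d₁ ≠ G.dinv (G.seq d₁ (G.stopN d₁)) := by
      have := G.seq_ne_dinv' ha (Nat.zero_le _) (le_refl _)
      rwa [G.seq_zero] at this
    have h22 : d₂ ≠ G.dinv (G.seq d₂ (G.stopN d₂)) := by
      have := G.seq_ne_dinv' hb (Nat.zero_le _) (le_refl _)
      rwa [G.seq_zero] at this
    have hcoveru := G.deg_three_cover hu3 hd₁ (by rw [G.dtail_dinv, hend₁]) hd₂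
      h12a hab (Ne.symm hne2)
    -- trail from d₂ ends at v
    have hend₂ : G.dhead (G.seq d₂ (G.stopN d₂)) = v := by
      rcases honly _ (G.stopN_spec hb) with h | h
      · exfalso
        rcases hcoveru (G.dinv (G.seq d₂ (G.stopN d₂))) (by rw [G.dtail_dinv, h]) with
          hh | hh | hh
        · exact G.cross_ne_dinv ha hb hab hne2 (G.stopN d₂) 0 (Nat.zero_le _) (le_refl _)
            (by rw [G.seq_zero, hh])
        · exact G.cross_ne ha hb hab hne2 (G.stopN d₁) (G.stopN d₂) (le_refl _) (le_refl _)
            (G.dinv_injective hh.symm)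
        · exact h22 hh.symm
      · exact h
    -- third trail from a dir at v
    obtain ⟨⟨d₃, hd₃⟩, hne3, _⟩ := exists_third hcardv
      ⟨G.dinv (G.seq d₂ (G.stopN d₂)), by rw [G.dtail_dinv, hend₂]⟩
      ⟨G.dinv (G.seq d₂ (G.stopN d₂)), by rw [G.dtail_dinv, hend₂]⟩
    rw [ne_eq, Subtype.mk.injEq] at hne3
    have hc := hdegv d₃ hd₃
    have hac : d₁ ≠ d₃ := fun h => huv (by rw [← hd₁, h, hd₃])
    have hbc : d₂ ≠ d₃ := fun h => huv (by rw [← hd₂, h, hd₃])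
    have hc2a : d₃ ≠ G.dinv (G.seq d₁ (G.stopN d₁)) := fun h =>
      huv (by rw [← hend₁, ← G.dtail_dinv (G.seq d₁ (G.stopN d₁)), ← h, hd₃])
    have hc2b : d₃ ≠ G.dinv (G.seq d₂ (G.stopN d₂)) := hne3
    have h33 : d₃ ≠ G.dinv (G.seq d₃ (G.stopN d₃)) := by
      have := G.seq_ne_dinv' hc (Nat.zero_le _) (le_refl _)
      rwa [G.seq_zero] at this
    -- trail from d₃ ends at v
    have hend₃ : G.dhead (G.seq d₃ (G.stopN d₃)) = v := by
      rcases honly _ (G.stopN_spec hc) with h | h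
      · exfalso
        rcases hcoveru (G.dinv (G.seq d₃ (G.stopN d₃))) (by rw [G.dtail_dinv, h]) with
          hh | hh | hh
        · exact G.cross_ne_dinv ha hc hac hc2a (G.stopN d₃) 0 (Nat.zero_le _) (le_refl _)
            (by rw [G.seq_zero, hh])
        · exact G.cross_ne ha hc hac hc2a (G.stopN d₁) (G.stopN d₃) (le_refl _) (le_refl _)
            (G.dinv_injective hh.symm)
        · exact G.cross_ne_dinv hb hc hbc hc2b (G.stopN d₃) 0 (Nat.zero_le _) (le_refl _)
            (by rw [G.seq_zero, hh.symm])
      · exact h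
    -- assembled objects
    have hcyc₁ : G.IsCycleAt u (G.trail d₁) := by
      have := G.trail_isCycle ha (by rw [hend₁, hd₁])
      rwa [hd₁] at this
    have hcyc₃ : G.IsCycleAt v (G.trail d₃) := by
      have := G.trail_isCycle hc (by rw [hend₃, hd₃])
      rwa [hd₃] at this
    have hpath₂ : G.IsPathBetween u v (G.trail d₂) := by
      have := G.trail_isPath hb
      rwa [hd₂, hend₂] at this
    have hdisj12 := G.trail_edge_disjoint ha hb hab hne2
    have hdisj13 := G.trail_edge_disjoint ha hc hac hc2a
    have hdisj23 := G.trail_edge_disjoint hb hc hbc hc2b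
    -- vertex facts
    have hvtx1 : ∀ x : G.V, G.vtxIn (G.trail d₁) x → G.deg x = 2 ∨ x = u := by
      intro x hx
      rcases G.trail_vtx_cases ha hx with h | h | h
      · exact Or.inl h
      · exact Or.inr (by rw [h, hd₁])
      · exact Or.inr (by rw [h, hend₁])
    have hvtx2 : ∀ x : G.V, G.vtxIn (G.trail d₂) x → G.deg x = 2 ∨ x = u ∨ x = v := by
      intro x hx
      rcases G.trail_vtx_cases hb hx with h | h | h
      · exact Or.inl h
      · exact Or.inr (Or.inl (by rw [h, hd₂]))
      · exact Or.inr (Or.inr (by rw [h, hend₂]))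
    have hvtx3 : ∀ x : G.V, G.vtxIn (G.trail d₃) x → G.deg x = 2 ∨ x = v := by
      intro x hx
      rcases G.trail_vtx_cases hc hx with h | h | h
      · exact Or.inl h
      · exact Or.inr (by rw [h, hd₃])
      · exact Or.inr (by rw [h, hend₃])
    have hu_not3 : ¬ G.vtxIn (G.trail d₃) u := by
      intro h
      rcases hvtx3 u h with h' | h'
      · omega
      · exact huv h'
    have hv_not1 : ¬ G.vtxIn (G.trail d₁) v := by
      intro h
      rcases hvtx1 v h with h' | h'
      · omega
      · exact huv h'.symm
    -- coverage
    set P : G.V → Prop := fun x => G.vtxIn (G.trail d₁) x ∨ G.vtxIn (G.trail d₂) x ∨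
      G.vtxIn (G.trail d₃) x with hP
    have hcoverv := G.deg_three_cover hv3 (by rw [G.dtail_dinv, hend₂]) hd₃
      (by rw [G.dtail_dinv, hend₃]) (Ne.symm hne3)
      (fun h => G.cross_ne hb hc hbc hc2b (G.stopN d₂) (G.stopN d₃) (le_refl _) (le_refl _)
        (G.dinv_injective h))
      h33
    have hfiber : ∀ x : G.V, P x → ∀ d : G.Dir, G.dtail d = x →
        d ∈ G.trail d₁ ∨ G.dinv d ∈ G.trail d₁ ∨ d ∈ G.trail d₂ ∨ G.dinv d ∈ G.trail d₂ ∨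
        d ∈ G.trail d₃ ∨ G.dinv d ∈ G.trail d₃ := by
      intro x hx d hdx
      by_cases h2 : G.deg x = 2
      · rcases hx with hx | hx | hx
        · rcases G.trail_fiber_step ha h2 hx hdx with h | h
          · exact Or.inl h
          · exact Or.inr (Or.inl h)
        · rcases G.trail_fiber_step hb h2 hx hdx with h | h
          · exact Or.inr (Or.inr (Or.inl h))
          · exact Or.inr (Or.inr (Or.inr (Or.inl h)))
        · rcases G.trail_fiber_step hc h2 hx hdx with h | h
          · exact Or.inr (Or.inr (Or.inr (Or.inr (Or.inl h))))
          · exact Or.inr (Or.inr (Or.inr (Or.inr (Or.inr h))))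
      · rcases honly x h2 with rfl | rfl
        · rcases hcoveru d hdx with h | h | h
          · exact Or.inl (h ▸ G.d0_mem_trail)
          · refine Or.inr (Or.inl ?_)
            rw [h, G.dinv_dinv]
            exact G.last_mem_trail
          · exact Or.inr (Or.inr (Or.inl (h ▸ G.d0_mem_trail)))
        · rcases hcoverv d hdx with h | h | h
          · refine Or.inr (Or.inr (Or.inr (Or.inl ?_)))
            rw [h, G.dinv_dinv]
            exact G.last_mem_trail
          · exact Or.inr (Or.inr (Or.inr (Or.inr (Or.inl (h ▸ G.d0_mem_trail)))))
          · refine Or.inr (Or.inr (Or.inr (Or.inr (Or.inr ?_))))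
            rw [h, G.dinv_dinv]
            exact G.last_mem_trail
    have hstep : ∀ x y : G.V, P x → G.adj x y → P y := by
      rintro x y hx ⟨d, hdt, hdh⟩
      rcases hfiber x hx d hdt with h | h | h | h | h | h
      · exact Or.inl (hdh ▸ G.vtxIn_of_mem_head h)
      · refine Or.inl ?_
        have := G.vtxIn_of_mem_tail h
        rwa [G.dtail_dinv, hdh] at this
      · exact Or.inr (Or.inl (hdh ▸ G.vtxIn_of_mem_head h))
      · refine Or.inr (Or.inl ?_)
        have := G.vtxIn_of_mem_tail h
        rwa [G.dtail_dinv, hdh] at this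
      · exact Or.inr (Or.inr (hdh ▸ G.vtxIn_of_mem_head h))
      · refine Or.inr (Or.inr ?_)
        have := G.vtxIn_of_mem_tail h
        rwa [G.dtail_dinv, hdh] at this
    have hPu : P u := Or.inl (hd₁ ▸ G.vtxIn_of_mem_tail G.d0_mem_trail)
    have hall := G.reach_all hconn P hstep hPu
    refine ⟨u, v, G.trail d₁, G.trail d₃, G.trail d₂, huv, hcyc₁, hcyc₃, hpath₂,
      ?_, ?_, ?_, ?_, ?_, ?_, ?_⟩
    · rintro e ⟨h1, h3⟩
      exact hdisj13 e ⟨h1, h3⟩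
    · rintro e ⟨h1, h2⟩
      exact hdisj12 e ⟨h1, h2⟩
    · rintro e ⟨h3, h2⟩
      exact hdisj23 e ⟨h2, h3⟩
    · intro x hx1 hx3
      rcases hvtx1 x hx1 with h | h
      · exact G.trail_vtx_disjoint ha hc hac hc2a h hx1 hx3
      · subst h
        exact hu_not3 hx3
    · intro x hx2 hx1
      rcases hvtx1 x hx1 with h | h
      · exact absurd (G.trail_vtx_disjoint ha hb hab hne2 h hx1 hx2) not_false
      · exact h
    · intro x hx2 hx3
      rcases hvtx3 x hx3 with h | h
      · exact absurd (G.trail_vtx_disjoint hb hc hbc hc2b h hx2 hx3) not_false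
      · exact h
    · intro e
      rcases hfiber (G.dtail (e, true)) (hall _) (e, true) rfl with h | h | h | h | h | h
      · exact Or.inl (G.edgeIn_of_mem h)
      · exact Or.inl (G.edgeIn_of_dinv_mem h)
      · exact Or.inr (Or.inr (G.edgeIn_of_mem h))
      · exact Or.inr (Or.inr (G.edgeIn_of_dinv_mem h))
      · exact Or.inr (Or.inl (G.edgeIn_of_mem h))
      · exact Or.inr (Or.inl (G.edgeIn_of_dinv_mem h))
  · -- Theta case
    right
    push_neg at hcyc
    have hendv : ∀ d : G.Dir, G.dtail d = u →
        G.dhead (G.seq d (G.stopN d)) = v := by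
      intro d hd
      rcases honly _ (G.stopN_spec (hdegu d hd)) with h | h
      · exact absurd h (hcyc d hd)
      · exact h
    obtain ⟨d₁, hd₁⟩ := G.exists_dir_at (v := u) (by omega)
    obtain ⟨⟨d₂, hd₂⟩, hne21, -⟩ := exists_third hcardu ⟨d₁, hd₁⟩ ⟨d₁, hd₁⟩
    obtain ⟨⟨d₃, hd₃⟩, hne31, hne32⟩ := exists_third hcardu ⟨d₁, hd₁⟩ ⟨d₂, hd₂⟩
    rw [ne_eq, Subtype.mk.injEq] at hne21 hne31 hne32
    have ha := hdegu d₁ hd₁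
    have hb := hdegu d₂ hd₂
    have hc := hdegu d₃ hd₃
    have hend₁ := hendv d₁ hd₁
    have hend₂ := hendv d₂ hd₂
    have hend₃ := hendv d₃ hd₃
    have hnd : ∀ a b : G.Dir, G.dtail a = u → G.dtail b = u →
        b ≠ G.dinv (G.seq a (G.stopN a)) := by
      intro a b hau hbu h
      apply huv
      rw [← hbu, h, G.dtail_dinv, hendv a hau]
    have hab : d₁ ≠ d₂ := Ne.symm hne21
    have hac : d₁ ≠ d₃ := Ne.symm hne31
    have hbc : d₂ ≠ d₃ := Ne.symm hne32
    have h21 := hnd d₁ d₂ hd₁ hd₂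
    have h31 := hnd d₁ d₃ hd₁ hd₃
    have h32 := hnd d₂ d₃ hd₂ hd₃
    have hdisj12 := G.trail_edge_disjoint ha hb hab h21
    have hdisj13 := G.trail_edge_disjoint ha hc hac h31
    have hdisj23 := G.trail_edge_disjoint hb hc hbc h32
    have hpath₁ : G.IsPathBetween u v (G.trail d₁) := by
      have := G.trail_isPath ha; rwa [hd₁, hend₁] at this
    have hpath₂ : G.IsPathBetween u v (G.trail d₂) := by
      have := G.trail_isPath hb; rwa [hd₂, hend₂] at this
    have hpath₃ : G.IsPathBetween u v (G.trail d₃) := by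
      have := G.trail_isPath hc; rwa [hd₃, hend₃] at this
    have hvtx : ∀ (d : G.Dir), G.dtail d = u → G.dhead (G.seq d (G.stopN d)) = v →
        ∀ x : G.V, G.vtxIn (G.trail d) x → G.deg x = 2 ∨ x = u ∨ x = v := by
      intro d hd hend x hx
      rcases G.trail_vtx_cases (hdegu d hd) hx with h | h | h
      · exact Or.inl h
      · exact Or.inr (Or.inl (by rw [h, hd]))
      · exact Or.inr (Or.inr (by rw [h, hend]))
    -- coverage
    set P : G.V → Prop := fun x => G.vtxIn (G.trail d₁) x ∨ G.vtxIn (G.trail d₂) x ∨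
      G.vtxIn (G.trail d₃) x with hP
    have hcoveru := G.deg_three_cover hu3 hd₁ hd₂ hd₃ hab hac hbc
    have hcoverv := G.deg_three_cover hv3
      (a := G.dinv (G.seq d₁ (G.stopN d₁))) (by rw [G.dtail_dinv, hend₁])
      (b := G.dinv (G.seq d₂ (G.stopN d₂))) (by rw [G.dtail_dinv, hend₂])
      (c := G.dinv (G.seq d₃ (G.stopN d₃))) (by rw [G.dtail_dinv, hend₃])
      (fun h => G.cross_ne ha hb hab h21 (G.stopN d₁) (G.stopN d₂) (le_refl _) (le_refl _)
        (G.dinv_injective h))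
      (fun h => G.cross_ne ha hc hac h31 (G.stopN d₁) (G.stopN d₃) (le_refl _) (le_refl _)
        (G.dinv_injective h))
      (fun h => G.cross_ne hb hc hbc h32 (G.stopN d₂) (G.stopN d₃) (le_refl _) (le_refl _)
        (G.dinv_injective h))
    have hfiber : ∀ x : G.V, P x → ∀ d : G.Dir, G.dtail d = x →
        d ∈ G.trail d₁ ∨ G.dinv d ∈ G.trail d₁ ∨ d ∈ G.trail d₂ ∨ G.dinv d ∈ G.trail d₂ ∨
        d ∈ G.trail d₃ ∨ G.dinv d ∈ G.trail d₃ := by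
      intro x hx d hdx
      by_cases h2 : G.deg x = 2
      · rcases hx with hx | hx | hx
        · rcases G.trail_fiber_step ha h2 hx hdx with h | h
          · exact Or.inl h
          · exact Or.inr (Or.inl h)
        · rcases G.trail_fiber_step hb h2 hx hdx with h | h
          · exact Or.inr (Or.inr (Or.inl h))
          · exact Or.inr (Or.inr (Or.inr (Or.inl h)))
        · rcases G.trail_fiber_step hc h2 hx hdx with h | h
          · exact Or.inr (Or.inr (Or.inr (Or.inr (Or.inl h))))
          · exact Or.inr (Or.inr (Or.inr (Or.inr (Or.inr h))))
      · rcases honly x h2 with rfl | rfl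
        · rcases hcoveru d hdx with h | h | h
          · exact Or.inl (h ▸ G.d0_mem_trail)
          · exact Or.inr (Or.inr (Or.inl (h ▸ G.d0_mem_trail)))
          · exact Or.inr (Or.inr (Or.inr (Or.inr (Or.inl (h ▸ G.d0_mem_trail)))))
        · rcases hcoverv d hdx with h | h | h
          · refine Or.inr (Or.inl ?_)
            rw [h, G.dinv_dinv]
            exact G.last_mem_trail
          · refine Or.inr (Or.inr (Or.inr (Or.inl ?_)))
            rw [h, G.dinv_dinv]
            exact G.last_mem_trail
          · refine Or.inr (Or.inr (Or.inr (Or.inr (Or.inr ?_))))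
            rw [h, G.dinv_dinv]
            exact G.last_mem_trail
    have hstep : ∀ x y : G.V, P x → G.adj x y → P y := by
      rintro x y hx ⟨d, hdt, hdh⟩
      rcases hfiber x hx d hdt with h | h | h | h | h | h
      · exact Or.inl (hdh ▸ G.vtxIn_of_mem_head h)
      · refine Or.inl ?_
        have := G.vtxIn_of_mem_tail h
        rwa [G.dtail_dinv, hdh] at this
      · exact Or.inr (Or.inl (hdh ▸ G.vtxIn_of_mem_head h))
      · refine Or.inr (Or.inl ?_)
        have := G.vtxIn_of_mem_tail h
        rwa [G.dtail_dinv, hdh] at this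
      · exact Or.inr (Or.inr (hdh ▸ G.vtxIn_of_mem_head h))
      · refine Or.inr (Or.inr ?_)
        have := G.vtxIn_of_mem_tail h
        rwa [G.dtail_dinv, hdh] at this
    have hPu : P u := Or.inl (hd₁ ▸ G.vtxIn_of_mem_tail G.d0_mem_trail)
    have hall := G.reach_all hconn P hstep hPu
    refine ⟨u, v, G.trail d₁, G.trail d₂, G.trail d₃, huv, hpath₁, hpath₂, hpath₃,
      hdisj12, hdisj13, hdisj23, ?_, ?_, ?_, ?_⟩
    · intro x hx1 hx2
      rcases hvtx d₁ hd₁ hend₁ x hx1 with h | h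
      · exact absurd (G.trail_vtx_disjoint ha hb hab h21 h hx1 hx2) not_false
      · exact h
    · intro x hx1 hx3
      rcases hvtx d₁ hd₁ hend₁ x hx1 with h | h
      · exact absurd (G.trail_vtx_disjoint ha hc hac h31 h hx1 hx3) not_false
      · exact h
    · intro x hx2 hx3
      rcases hvtx d₂ hd₂ hend₂ x hx2 with h | h
      · exact absurd (G.trail_vtx_disjoint hb hc hbc h32 h hx2 hx3) not_false
      · exact h
    · intro e
      rcases hfiber (G.dtail (e, true)) (hall _) (e, true) rfl with h | h | h | h | h | h
      · exact Or.inl (G.edgeIn_of_mem h)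
      · exact Or.inl (G.edgeIn_of_dinv_mem h)
      · exact Or.inr (Or.inl (G.edgeIn_of_mem h))
      · exact Or.inr (Or.inl (G.edgeIn_of_dinv_mem h))
      · exact Or.inr (Or.inr (G.edgeIn_of_mem h))
      · exact Or.inr (Or.inr (G.edgeIn_of_dinv_mem h))

end MGraph
/-- Every finite connected graph with Euler characteristic `-1` and no vertex
of degree 1 is a figure-eight graph, a barbell graph, or a theta graph. -/
theorem classify_eulerChar_neg_one (G : MGraph) [Finite G.V] [Finite G.E]
    (hconn : G.Connected) (hleaf : ∀ v : G.V, G.deg v ≠ 1)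
    (hchi : G.eulerChar = -1) :
    G.IsFigureEight ∨ G.IsBarbell ∨ G.IsTheta := by
  rcases G.degree_classification hconn hleaf hchi with ⟨v, h4, hrest⟩ |
    ⟨u, v, huv, hu3, hv3, hrest⟩
  · exact Or.inl (G.figureEight_of_deg4 hconn h4 hrest)
  · rcases G.classify_deg3 hconn huv hu3 hv3 hrest with h | h
    · exact Or.inr (Or.inl h)
    · exact Or.inr (Or.inr h)
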